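/- Over the field Z/2Z, if c is a homological d-cycle in a simplicial complex, then each d-path-connected component of the support complex of c is a d-dimensional cycle. -/

import Mathlib

namespace ConnonFaridi

open Finset
open scoped Classical

noncomputable section

variable {V : Type*} [Fintype V] [DecidableEq V]

/-- An abstract simplicial complex on vertex type `V`: a family of faces closed under subsets. -/
def IsComplex (K : Finset (Finset V)) : Prop :=
  ∀ F ∈ K, ∀ F' ⊆ F, F' ∈ K

/-- The vertex set of a complex. -/
def verts (K : Finset (Finset V)) : Finset V := K.sup id

/-- `K` is pure of dimension `n`: every face is contained in a face of dimension `n`. -/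
def IsPureDim (n : ℕ) (K : Finset (Finset V)) : Prop :=
  ∀ F ∈ K, ∃ G ∈ K, F ⊆ G ∧ G.card = n + 1

/-- The pure d-skeleton: the complex generated by (downward closure of) the d-faces of `K`. -/
def skeleton (d : ℕ) (K : Finset (Finset V)) : Finset (Finset V) :=
  (K.filter fun G => G.card = d + 1).biUnion Finset.powerset

/-- The d-closure of a (pure d-dimensional) complex `K`, relative to the vertex set `W`:
faces are all subsets of `W` of size at most `d`, together with those subsets all of whose
(d+1)-element subsets are faces of `K`. -/
def closureOn (W : Finset V) (d : ℕ) (K : Finset (Finset V)) : Finset (Finset V) :=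
  W.powerset.filter fun S => S.card ≤ d ∨ ∀ T ⊆ S, T.card = d + 1 → T ∈ K

/-- The d-closure `Δ_d(K)` on the vertex set of `K`. -/
def closure (d : ℕ) (K : Finset (Finset V)) : Finset (Finset V) :=
  closureOn (verts K) d K

/-- The induced subcomplex of `K` on the vertex set `W`. -/
def induced (K : Finset (Finset V)) (W : Finset V) : Finset (Finset V) :=
  K.filter fun F => F ⊆ W

/-- The Z/2 simplicial boundary of a chain, encoded as the finset of faces with coefficient 1:
the boundary consists of those sets which are codimension-one subsets of an odd number of
members of the chain. (For a chain of vertices this is the reduced/augmented boundary.) -/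
def bdry (c : Finset (Finset V)) : Finset (Finset V) :=
  (c.biUnion Finset.powerset).filter fun T =>
    Odd ((c.filter fun F => T ⊆ F ∧ T.card + 1 = F.card).card)

/-- Two d-faces of the family `c` are adjacent if they intersect in a (d-1)-face. -/
def adjOn (d : ℕ) (c : Finset (Finset V)) (A B : Finset V) : Prop :=
  A ∈ c ∧ B ∈ c ∧ (A ∩ B).card = d

/-- A d-dimensional cycle, recorded by its set `Ω` of d-faces: a nonempty pure d-dimensional,
d-path-connected complex in which every (d-1)-face lies in an even number of d-faces. -/
def IsCycleFaces (d : ℕ) (Ω : Finset (Finset V)) : Prop :=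
  Ω.Nonempty ∧ (∀ F ∈ Ω, F.card = d + 1) ∧
    (∀ F ∈ Ω, ∀ G ∈ Ω, Relation.ReflTransGen (adjOn d Ω) F G) ∧
    ∀ T : Finset V, T.card = d → Even ((Ω.filter fun F => T ⊆ F).card)

/-- A d-dimensional cycle is face-minimal if no proper subset of its d-faces is a
d-dimensional cycle. -/
def FaceMinimal (d : ℕ) (Ω : Finset (Finset V)) : Prop :=
  ∀ Ω' ⊂ Ω, ¬ IsCycleFaces d Ω'

/-- The complex generated by `Ω` is j-complete: it contains all j-faces on its vertex set. -/
def CompleteOn (j : ℕ) (Ω : Finset (Finset V)) : Prop :=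
  ∀ S ⊆ verts Ω, S.card = j + 1 → ∃ F ∈ Ω, S ⊆ F

/-- `C` is a chord set of the d-dimensional cycle `Ω` in the complex `Γ` (Connon–Faridi). -/
def IsChordSet (d : ℕ) (Γ Ω C : Finset (Finset V)) : Prop :=
  (∀ F ∈ C, F ∈ Γ ∧ F.card = d + 1 ∧ F ∉ Ω) ∧
  ∃ L : List (Finset (Finset V)), 2 ≤ L.length ∧
    (∀ Ωi ∈ L, IsCycleFaces d Ωi ∧ (∀ F ∈ Ωi, F ∈ C ∪ Ω) ∧ (verts Ωi).card < (verts Ω).card) ∧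
    (∀ F ∈ C ∪ Ω, ∃ Ωi ∈ L, F ∈ Ωi) ∧
    (∀ F ∈ C, Even (L.countP fun Ωi => decide (F ∈ Ωi))) ∧
    (∀ F ∈ Ω, Odd (L.countP fun Ωi => decide (F ∈ Ωi)))

/-- `Γ` is d-chorded: it is pure of dimension `d ≥ 1` and every face-minimal, non-d-complete
d-dimensional cycle in `Γ` has a chord set in `Γ`. -/
def IsChorded (d : ℕ) (Γ : Finset (Finset V)) : Prop :=
  1 ≤ d ∧ IsPureDim d Γ ∧
    ∀ Ω ⊆ Γ, IsCycleFaces d Ω → FaceMinimal d Ω → ¬ CompleteOn d Ω →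
      ∃ C, IsChordSet d Γ Ω C

/-- The reduced simplicial homology of `K` over Z/2 vanishes in dimension `i`:
every homological i-cycle is an i-boundary. -/
def HVanishes (K : Finset (Finset V)) (i : ℕ) : Prop :=
  ∀ c : Finset (Finset V), (∀ F ∈ c, F ∈ K ∧ F.card = i + 1) → bdry c = ∅ →
    ∃ c' : Finset (Finset V), (∀ F ∈ c', F ∈ K ∧ F.card = i + 2) ∧ bdry c' = c

/-- The Stanley–Reisner complex of the square-free monomial ideal generated by the
sets (monomials) in `𝒢`: faces are the sets containing no generator. -/
def stanleyReisner (𝒢 : Finset (Finset V)) : Finset (Finset V) :=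
  Finset.univ.powerset.filter fun S => ∀ G ∈ 𝒢, ¬ G ⊆ S

/-- The facet complex of the square-free monomial ideal generated by `𝒢`. -/
def facetCx (𝒢 : Finset (Finset V)) : Finset (Finset V) :=
  Finset.univ.powerset.filter fun S => ∃ G ∈ 𝒢, S ⊆ G

/-- The d-complement of `K`: the complex whose facets are the (d+1)-element sets
that are not faces of `K`. -/
def dComplement (d : ℕ) (K : Finset (Finset V)) : Finset (Finset V) :=
  Finset.univ.powerset.filter fun S => ∃ T, S ⊆ T ∧ T.card = d + 1 ∧ T ∉ K

/-- The ideal generated by the square-free degree-(d+1) monomials `𝒢` has a (d+1)-linear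
resolution over a field of characteristic 2.  (Formalized via Fröberg's criterion, which over a
field of characteristic 2 amounts to the vanishing of the reduced Z/2 homology of all induced
subcomplexes of the Stanley–Reisner complex in every dimension `i ≠ (d+1) - 2`.) -/
def HasLinRes (d : ℕ) (𝒢 : Finset (Finset V)) : Prop :=
  ∀ (W : Finset V) (i : ℕ), i ≠ d - 1 → HVanishes (induced (stanleyReisner 𝒢) W) i

/-- A graph is chordal if every cycle of length at least 4 has a chord. -/
def IsChordalGraph (G : SimpleGraph V) : Prop :=
  ∀ (v : V) (p : G.Walk v v), p.IsCycle → 4 ≤ p.length →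
    ∃ u w, u ∈ p.support ∧ w ∈ p.support ∧ G.Adj u w ∧ s(u, w) ∉ p.edges

/-- The clique complex of a graph. -/
def cliqueCx (G : SimpleGraph V) : Finset (Finset V) :=
  Finset.univ.powerset.filter fun S => G.IsClique (S : Set V)

/-- A graph viewed as a pure 1-dimensional simplicial complex (faces: subsets of edges). -/
def graphCx (G : SimpleGraph V) : Finset (Finset V) :=
  Finset.univ.powerset.filter fun S => ∃ u v, G.Adj u v ∧ S ⊆ ({u, v} : Finset V)

/-- The generating set of the edge ideal of a graph: its edges as 2-element sets. -/
def edgeGens (G : SimpleGraph V) : Finset (Finset V) :=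
  Finset.univ.powerset.filter fun S => ∃ u v, G.Adj u v ∧ S = {u, v}

/-- Over Z/2, if c is a homological d-cycle in a simplicial complex K, then each
d-path-connected component of the support complex of c is a d-dimensional cycle. -/
theorem stmt5 (d : ℕ) (hd : 1 ≤ d) (K c : Finset (Finset V)) (hK : IsComplex K)
    (hc : ∀ F ∈ c, F ∈ K ∧ F.card = d + 1) (hcyc : bdry c = ∅) :
    ∀ F ∈ c, IsCycleFaces d (c.filter fun G => Relation.ReflTransGen (adjOn d c) F G) := by
  intro F hF
  set Ω := c.filter fun G => Relation.ReflTransGen (adjOn d c) F G with hΩ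
  have hΩsub : Ω ⊆ c := Finset.filter_subset _ _
  have hmemΩ : ∀ G, G ∈ Ω ↔ G ∈ c ∧ Relation.ReflTransGen (adjOn d c) F G := by
    intro G; simp [hΩ]
  have hFΩ : F ∈ Ω := (hmemΩ F).2 ⟨hF, .refl⟩
  -- lifting paths from c to Ω
  have lift : ∀ b, Relation.ReflTransGen (adjOn d c) F b →
      Relation.ReflTransGen (adjOn d Ω) F b := by
    intro b h
    induction h with
    | refl => exact .refl
    | @tail a b h hab ih =>
      have haΩ : a ∈ Ω := (hmemΩ a).2 ⟨hab.1, h⟩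
      have hbΩ : b ∈ Ω := (hmemΩ b).2 ⟨hab.2.1, h.tail hab⟩
      exact ih.tail ⟨haΩ, hbΩ, hab.2.2⟩
  have hsymm : Symmetric (adjOn d Ω) := by
    intro A B h
    exact ⟨h.2.1, h.1, by rw [Finset.inter_comm]; exact h.2.2⟩
  refine ⟨⟨F, hFΩ⟩, fun G hG => (hc G (hΩsub hG)).2, ?_, ?_⟩
  · intro G₁ hG₁ G₂ hG₂
    have p₁ := lift G₁ ((hmemΩ G₁).1 hG₁).2
    have p₂ := lift G₂ ((hmemΩ G₂).1 hG₂).2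
    exact ((@Relation.ReflTransGen.stdSymm _ _ ⟨fun _ _ h => hsymm h⟩).symm _ _ p₁).trans p₂
  · intro T hT
    have key : ∀ A ∈ c, T ⊆ A → ∀ B ∈ c, T ⊆ B → A ≠ B → adjOn d c A B := by
      intro A hA hTA B hB hTB hne
      refine ⟨hA, hB, ?_⟩
      have h1 : d ≤ (A ∩ B).card := by
        have := Finset.card_le_card (Finset.subset_inter hTA hTB)
        omega
      have h2 : (A ∩ B).card ≤ d + 1 := by
        have := Finset.card_le_card ((Finset.inter_subset_left : A ∩ B ⊆ A))
        have := (hc A hA).2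
        omega
      rcases Nat.lt_or_ge (A ∩ B).card (d + 1) with h | h
      · omega
      · exfalso
        have hAB : A ∩ B = A := Finset.eq_of_subset_of_card_le
          Finset.inter_subset_left (by rw [(hc A hA).2]; exact h)
        have hBA : A ⊆ B := by rw [← hAB]; exact Finset.inter_subset_right
        exact hne (Finset.eq_of_subset_of_card_le hBA
          (by rw [(hc A hA).2, (hc B hB).2]))
    by_cases hex : ∃ A ∈ Ω, T ⊆ A
    · obtain ⟨A, hAΩ, hTA⟩ := hex
      have heq : Ω.filter (fun G => T ⊆ G) = c.filter (fun G => T ⊆ G) := by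
        apply Finset.Subset.antisymm
        · intro G hG
          simp only [Finset.mem_filter] at hG ⊢
          exact ⟨hΩsub hG.1, hG.2⟩
        · intro B hB
          simp only [Finset.mem_filter] at hB ⊢
          refine ⟨(hmemΩ B).2 ⟨hB.1, ?_⟩, hB.2⟩
          by_cases hAB : A = B
          · exact hAB ▸ ((hmemΩ A).1 hAΩ).2
          · exact ((hmemΩ A).1 hAΩ).2.tail
              (key A (hΩsub hAΩ) hTA B hB.1 hB.2 hAB)
      rw [heq]
      have hTbd : T ∉ bdry c := by rw [hcyc]; exact Finset.notMem_empty T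
      rw [bdry, Finset.mem_filter] at hTbd
      have hTbi : T ∈ c.biUnion Finset.powerset := by
        exact Finset.mem_biUnion.2 ⟨A, hΩsub hAΩ, Finset.mem_powerset.2 hTA⟩
      have hodd : ¬ Odd ((c.filter fun G => T ⊆ G ∧ T.card + 1 = G.card).card) :=
        fun h => hTbd ⟨hTbi, h⟩
      have hcong : (c.filter fun G => T ⊆ G ∧ T.card + 1 = G.card)
          = c.filter fun G => T ⊆ G := by
        apply Finset.filter_congr
        intro G hG
        simp only [hT, (hc G hG).2, eq_self_iff_true, and_true]
      rw [hcong] at hodd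
      exact Nat.not_odd_iff_even.1 hodd
    · have : Ω.filter (fun G => T ⊆ G) = ∅ := by
        rw [Finset.filter_eq_empty_iff]
        intro G hG hTG
        exact hex ⟨G, hG, hTG⟩
      rw [this]
      simp

end

end ConnonFaridi
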